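/- arXiv:1711.00359 — 8 statements merged into one kernel-verified Lean document; each statement's English description precedes it below -/
import Mathlib

section
/- Let n and k be positive integers with 1 ≤ k < n, and let x = (U_x, V_x) and y = (U_y, V_y) be two distinct feasible solutions of the balanced complete bipartite subgraph problem (i.e. U_x, V_x, U_y, V_y ⊆ Fin n with |U_x| = |V_x| = |U_y| = |V_y| = k). Then x and y are adjacent (there exists c : Fin n → Fin n → ℝ with w_c(x) = w_c(y) and w_c(z) < w_c(x) for every feasible z ∉ {x, y}) if and only if either the subgraphs have no common parts, i.e. U_x ≠ U_y and V_x ≠ V_y, or they coincide in one part and differ in exactly one vertex in the other, i.e. (U_x = U_y and |V_x \ V_y| = 1) or (V_x = V_y and |U_x \ U_y| = 1). -/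
open Finset

/-- The weight of the biclique with parts `U`, `V` under the edge-weight
function `c` on the complete bipartite graph `K_{n,n}`. -/
noncomputable def weight {n : ℕ} (c : Fin n → Fin n → ℝ) (U V : Finset (Fin n)) : ℝ :=
  ∑ i ∈ U, ∑ j ∈ V, c i j

lemma weight_flip {n : ℕ} (c : Fin n → Fin n → ℝ) (U V : Finset (Fin n)) :
    weight (fun i j => c j i) V U = weight c U V := by
  unfold weight; exact Finset.sum_comm

lemma sum_indicator {n : ℕ} (U S : Finset (Fin n)) :
    ∑ i ∈ U, (if i ∈ S then (1:ℝ) else 0) = ((U ∩ S).card : ℝ) := by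
  rw [Finset.sum_ite_mem]
  simp

lemma weight_expand {n : ℕ} (Ux Vx Uy Vy : Finset (Fin n)) (M : ℝ)
    (U V : Finset (Fin n)) :
    weight (fun i j =>
      (M+1) * ((if i ∈ Ux then (1:ℝ) else 0) * (if j ∈ Vx then (1:ℝ) else 0))
      + (M+1) * ((if i ∈ Uy then (1:ℝ) else 0) * (if j ∈ Vy then (1:ℝ) else 0))
      - M * ((if i ∈ Ux ∩ Uy then (1:ℝ) else 0) * (if j ∈ Vx ∩ Vy then (1:ℝ) else 0))
      - M) U V
    = (M+1) * (((U ∩ Ux).card : ℝ) * ((V ∩ Vx).card : ℝ))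
      + (M+1) * (((U ∩ Uy).card : ℝ) * ((V ∩ Vy).card : ℝ))
      - M * (((U ∩ (Ux ∩ Uy)).card : ℝ) * ((V ∩ (Vx ∩ Vy)).card : ℝ))
      - M * ((U.card : ℝ) * (V.card : ℝ)) := by
  unfold weight
  simp only [Finset.sum_add_distrib, Finset.sum_sub_distrib, ← Finset.mul_sum,
    ← Finset.sum_mul_sum, Finset.sum_const, nsmul_eq_mul, mul_one]
  rw [← Finset.sum_mul, ← Finset.sum_mul, ← Finset.sum_mul]
  simp only [sum_indicator]
  ring

lemma keycard {n : ℕ} (Ux Vx Uy Vy Uz Vz : Finset (Fin n)) :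
    (Uz ∩ Ux).card * (Vz ∩ Vx).card + (Uz ∩ Uy).card * (Vz ∩ Vy).card
      = ((Uz ×ˢ Vz) ∩ (Ux ×ˢ Vx ∪ Uy ×ˢ Vy)).card
        + (Uz ∩ (Ux ∩ Uy)).card * (Vz ∩ (Vx ∩ Vy)).card := by
  have h1 : (Uz ×ˢ Vz) ∩ (Ux ×ˢ Vx) = (Uz ∩ Ux) ×ˢ (Vz ∩ Vx) := Finset.product_inter_product
  have h2 : (Uz ×ˢ Vz) ∩ (Uy ×ˢ Vy) = (Uz ∩ Uy) ×ˢ (Vz ∩ Vy) := Finset.product_inter_product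
  have h3 : ((Uz ∩ Ux) ×ˢ (Vz ∩ Vx)) ∩ ((Uz ∩ Uy) ×ˢ (Vz ∩ Vy))
      = (Uz ∩ (Ux ∩ Uy)) ×ˢ (Vz ∩ (Vx ∩ Vy)) := by
    rw [Finset.product_inter_product]
    congr 1 <;> aesop (add norm [Finset.ext_iff, Finset.mem_inter])
  have h4 := Finset.card_union_add_card_inter ((Uz ∩ Ux) ×ˢ (Vz ∩ Vx)) ((Uz ∩ Uy) ×ˢ (Vz ∩ Vy))
  rw [h3] at h4
  have h5 : ((Uz ∩ Ux) ×ˢ (Vz ∩ Vx)) ∪ ((Uz ∩ Uy) ×ˢ (Vz ∩ Vy))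
      = (Uz ×ˢ Vz) ∩ (Ux ×ˢ Vx ∪ Uy ×ˢ Vy) := by
    rw [Finset.inter_union_distrib_left, h1, h2]
  rw [h5] at h4
  simp only [Finset.card_product] at h4 ⊢
  omega

lemma subset_of_eq_keycard {n : ℕ} {A F : Finset (Fin n × Fin n)}
    (h : (A ∩ F).card = A.card) : A ⊆ F := by
  have := Finset.eq_of_subset_of_card_le (Finset.inter_subset_left : A ∩ F ⊆ A) (le_of_eq h.symm)
  exact Finset.inter_eq_left.mp this

-- case A: both parts differ
lemma caseA {n k : ℕ} (hk : 1 ≤ k) {Ux Vx Uy Vy Uz Vz : Finset (Fin n)}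
    (hUx : Ux.card = k) (hVx : Vx.card = k) (hUy : Uy.card = k) (hVy : Vy.card = k)
    (hUz : Uz.card = k) (hVz : Vz.card = k)
    (hUxy : Ux ≠ Uy) (hVxy : Vx ≠ Vy)
    (hsub : Uz ×ˢ Vz ⊆ Ux ×ˢ Vx ∪ Uy ×ˢ Vy) :
    (Uz = Ux ∧ Vz = Vx) ∨ (Uz = Uy ∧ Vz = Vy) := by
  have hVzne : Vz.Nonempty := Finset.card_pos.mp (by omega)
  have hmem : ∀ i ∈ Uz, ∀ j ∈ Vz, (i ∈ Ux ∧ j ∈ Vx) ∨ (i ∈ Uy ∧ j ∈ Vy) := by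
    intro i hi j hj
    have := hsub (Finset.mk_mem_product hi hj)
    simpa [Finset.mem_union, Finset.mem_product] using this
  -- some element of Uz outside Ux ∩ Uy
  have hssub : ¬ Uz ⊆ Ux ∩ Uy := by
    intro hsubU
    have h1 : (Ux ∩ Uy).card < k := by
      rcases (Finset.card_le_card (Finset.inter_subset_left : Ux ∩ Uy ⊆ Ux)).lt_or_eq with h | h
      · omega
      · exfalso
        have : Ux ∩ Uy = Ux := Finset.eq_of_subset_of_card_le Finset.inter_subset_left (by omega)
        exact hUxy (Finset.eq_of_subset_of_card_le (Finset.inter_eq_left.mp this) (by omega))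
    have := Finset.card_le_card hsubU
    omega
  obtain ⟨i₀, hi₀z, hi₀⟩ := Finset.not_subset.mp hssub
  have hVxyne : ∃ j₀ ∈ Vx, j₀ ∉ Vy := by
    by_contra h
    push_neg at h
    exact hVxy (Finset.eq_of_subset_of_card_le h (by omega))
  have hVyxne : ∃ j₀ ∈ Vy, j₀ ∉ Vx := by
    by_contra h
    push_neg at h
    exact hVxy.symm (Finset.eq_of_subset_of_card_le h (by omega))
  rw [Finset.mem_inter] at hi₀
  by_cases hix : i₀ ∈ Ux
  · have hiy : i₀ ∉ Uy := fun h => hi₀ ⟨hix, h⟩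
    have hVzx : Vz ⊆ Vx := by
      intro j hj
      rcases hmem i₀ hi₀z j hj with ⟨_, h⟩ | ⟨h, _⟩
      · exact h
      · exact absurd h hiy
    have hVzx' : Vz = Vx := Finset.eq_of_subset_of_card_le hVzx (by omega)
    obtain ⟨j₀, hj₀x, hj₀y⟩ := hVxyne
    have hUzx : Uz ⊆ Ux := by
      intro i hi
      rcases hmem i hi j₀ (hVzx' ▸ hj₀x) with ⟨h, _⟩ | ⟨_, h⟩
      · exact h
      · exact absurd h hj₀y
    exact Or.inl ⟨Finset.eq_of_subset_of_card_le hUzx (by omega), hVzx'⟩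
  · have hiy : i₀ ∈ Uy := by
      obtain ⟨j, hj⟩ := hVzne
      rcases hmem i₀ hi₀z j hj with ⟨h, _⟩ | ⟨h, _⟩
      · exact absurd h hix
      · exact h
    have hVzy : Vz ⊆ Vy := by
      intro j hj
      rcases hmem i₀ hi₀z j hj with ⟨h, _⟩ | ⟨_, h⟩
      · exact absurd h hix
      · exact h
    have hVzy' : Vz = Vy := Finset.eq_of_subset_of_card_le hVzy (by omega)
    obtain ⟨j₀, hj₀y, hj₀x⟩ := hVyxne
    have hUzy : Uz ⊆ Uy := by
      intro i hi
      rcases hmem i hi j₀ (hVzy' ▸ hj₀y) with ⟨_, h⟩ | ⟨h, _⟩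
      · exact absurd h hj₀x
      · exact h
    exact Or.inr ⟨Finset.eq_of_subset_of_card_le hUzy (by omega), hVzy'⟩

-- case B helper: one-element difference
lemma oneDiff {n k : ℕ} {Vx Vy Vz : Finset (Fin n)}
    (hVx : Vx.card = k) (hVy : Vy.card = k) (hVz : Vz.card = k) (hd : (Vx \ Vy).card = 1)
    (hsub : Vz ⊆ Vx ∪ Vy) (hzx : Vz ≠ Vx) (hzy : Vz ≠ Vy) :
    (Vz ∩ (Vx ∩ Vy)).card < (Vx ∩ Vy).card := by
  have hSk : (Vx ∩ Vy).card = k - 1 := by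
    have := Finset.card_sdiff_add_card_inter Vx Vy
    omega
  rcases (Finset.card_le_card (Finset.inter_subset_right : Vz ∩ (Vx ∩ Vy) ⊆ Vx ∩ Vy)).lt_or_eq with h | h
  · exact h
  exfalso
  have hS : Vx ∩ Vy ⊆ Vz :=
    Finset.inter_eq_right.mp (Finset.eq_of_subset_of_card_le Finset.inter_subset_right (le_of_eq h.symm))
  obtain ⟨t, htz, htx⟩ := Finset.not_subset.mp (fun hh => hzx (Finset.eq_of_subset_of_card_le hh (by omega)))
  obtain ⟨t', htz', hty'⟩ := Finset.not_subset.mp (fun hh => hzy (Finset.eq_of_subset_of_card_le hh (by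
    have := (Finset.card_le_card hh)
    omega)))
  have htS : t ∉ Vx ∩ Vy := fun h => htx (Finset.mem_inter.mp h).1
  have htS' : t' ∉ Vx ∩ Vy := fun h => hty' (Finset.mem_inter.mp h).2
  have hk1 : 1 ≤ k := by
    have := Finset.card_le_card (Finset.sdiff_subset : Vx \ Vy ⊆ Vx)
    omega
  have htt' : t ≠ t' := by
    intro h
    subst h
    rcases Finset.mem_union.mp (hsub htz) with h | h
    · exact htx h
    · exact hty' h
  have hsub2 : insert t (insert t' (Vx ∩ Vy)) ⊆ Vz := by
    intro x hx
    rcases Finset.mem_insert.mp hx with rfl | hx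
    · exact htz
    rcases Finset.mem_insert.mp hx with rfl | hx
    · exact htz'
    · exact hS hx
  have hnm1 : t ∉ insert t' (Vx ∩ Vy) := by
    simp only [Finset.mem_insert]
    rintro (rfl | h)
    · exact htt' rfl
    · exact htS h
  have hcard : (insert t (insert t' (Vx ∩ Vy))).card = k + 1 := by
    rw [Finset.card_insert_of_notMem hnm1, Finset.card_insert_of_notMem htS', hSk]
    omega
  have := Finset.card_le_card hsub2
  omega

lemma numeric {k E a b a' b' a2 b2 p q : ℕ} (M : ℝ) (hM : M = (k:ℝ)*k + 1)
    (hc : a*b + a'*b' = E + a2*b2)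
    (ha2 : a2 ≤ k) (hb2 : b2 ≤ k)
    (h : E < k*k ∨ (E = k*k ∧ a2*b2 < p*q)) :
    (M+1) * ((a:ℝ)*b) + (M+1)*((a':ℝ)*b') - M*((a2:ℝ)*b2) - M*((k:ℝ)*k)
      < (M+1)*((k:ℝ)*k) + (M+1)*((p:ℝ)*q) - M*((p:ℝ)*q) - M*((k:ℝ)*k) := by
  have hcR : (a:ℝ)*b + (a':ℝ)*b' = (E:ℝ) + (a2:ℝ)*b2 := by exact_mod_cast hc
  have hcR2 : ((k:ℝ)*k+1) * ((a:ℝ)*b + (a':ℝ)*b') = ((k:ℝ)*k+1) * ((E:ℝ) + (a2:ℝ)*b2) := by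
    rw [hcR]
  have ha2b2 : (a2:ℝ)*b2 ≤ (k:ℝ)*k := by
    have := Nat.mul_le_mul ha2 hb2
    exact_mod_cast this
  have hpq : (0:ℝ) ≤ (p:ℝ)*q := by positivity
  subst hM
  rcases h with h | ⟨hE, hlt⟩
  · have hER : (E:ℝ) ≤ (k:ℝ)*k - 1 := by
      have : (E:ℝ) + 1 ≤ (k:ℝ)*k := by exact_mod_cast h
      linarith
    have hprod : (0:ℝ) ≤ ((k:ℝ)*k + 2) * ((k:ℝ)*k - 1 - E) :=
      mul_nonneg (by positivity) (by linarith)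
    nlinarith [hcR, hcR2, hprod, ha2b2, hpq]
  · have hER : (E:ℝ) = (k:ℝ)*k := by exact_mod_cast hE
    have hER2 : ((k:ℝ)*k)*(E:ℝ) = ((k:ℝ)*k)*((k:ℝ)*k) := by rw [hER]
    have hltR : (a2:ℝ)*b2 < (p:ℝ)*q := by exact_mod_cast hlt
    nlinarith [hcR, hcR2, hER, hER2, hltR]

lemma exchange {n k : ℕ} (U Vx Vy : Finset (Fin n)) (hU : U.card = k)
    (hVx : Vx.card = k) (hVy : Vy.card = k) (h2 : 2 ≤ (Vx \ Vy).card)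
    (c : Fin n → Fin n → ℝ)
    (hcw : weight c U Vx = weight c U Vy)
    (hmax : ∀ Uz Vz : Finset (Fin n), Uz.card = k → Vz.card = k →
        (Uz, Vz) ≠ (U, Vx) → (Uz, Vz) ≠ (U, Vy) →
        weight c Uz Vz < weight c U Vx) : False := by
  have h2' : 2 ≤ (Vy \ Vx).card := by
    rw [Finset.card_sdiff_comm (by omega : Vy.card = Vx.card)]; exact h2
  obtain ⟨a, ha, a', ha', haa⟩ := Finset.one_lt_card.mp h2
  obtain ⟨b, hb, b', hb', hbb⟩ := Finset.one_lt_card.mp h2'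
  rw [Finset.mem_sdiff] at ha ha' hb hb'
  set Vz1 := insert b (Vx.erase a) with hVz1
  set Vz2 := insert a (Vy.erase b) with hVz2
  have hk1 : 1 ≤ k := by
    have := Finset.card_le_card (Finset.sdiff_subset : Vx \ Vy ⊆ Vx); omega
  have hbnm : b ∉ Vx.erase a := fun h => hb.2 (Finset.mem_of_mem_erase h)
  have hanm : a ∉ Vy.erase b := fun h => ha.2 (Finset.mem_of_mem_erase h)
  have hcz1 : Vz1.card = k := by
    rw [hVz1, Finset.card_insert_of_notMem hbnm, Finset.card_erase_of_mem ha.1]; omega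
  have hcz2 : Vz2.card = k := by
    rw [hVz2, Finset.card_insert_of_notMem hanm, Finset.card_erase_of_mem hb.1]; omega
  have hkey : weight c U Vz1 + weight c U Vz2 = weight c U Vx + weight c U Vy := by
    unfold weight
    rw [← Finset.sum_add_distrib, ← Finset.sum_add_distrib]
    refine Finset.sum_congr rfl fun i _ => ?_
    rw [hVz1, hVz2, Finset.sum_insert hbnm, Finset.sum_insert hanm,
      Finset.sum_erase_eq_sub ha.1, Finset.sum_erase_eq_sub hb.1]
    ring
  have hab : a ≠ b := fun h => hb.2 (h ▸ ha.1)
  have hz1x : Vz1 ≠ Vx := by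
    intro h
    have : a ∈ Vz1 := h ▸ ha.1
    rw [hVz1, Finset.mem_insert] at this
    rcases this with h' | h'
    · exact hab h'
    · exact (Finset.notMem_erase a Vx) h'
  have hz1y : Vz1 ≠ Vy := by
    intro h
    have : a' ∈ Vz1 := by
      rw [hVz1, Finset.mem_insert]
      exact Or.inr (Finset.mem_erase.mpr ⟨haa.symm, ha'.1⟩)
    exact ha'.2 (h ▸ this)
  have hba : b ≠ a := fun h => ha.2 (h ▸ hb.1)
  have hz2y : Vz2 ≠ Vy := by
    intro h
    have : b ∈ Vz2 := h ▸ hb.1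
    rw [hVz2, Finset.mem_insert] at this
    rcases this with h' | h'
    · exact hba h'
    · exact (Finset.notMem_erase b Vy) h'
  have hz2x : Vz2 ≠ Vx := by
    intro h
    have : b' ∈ Vz2 := by
      rw [hVz2, Finset.mem_insert]
      exact Or.inr (Finset.mem_erase.mpr ⟨hbb.symm, hb'.1⟩)
    exact hb'.2 (h ▸ this)
  have hlt1 := hmax U Vz1 hU hcz1 (by simp [hz1x]) (by simp [hz1y])
  have hlt2 := hmax U Vz2 hU hcz2 (by simp [hz2x]) (by simp [hz2y])
  linarith

/-- Adjacency criterion in the 1-skeleton of the polytope `WBCBS(n,k)`: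
two distinct feasible solutions `x = (Ux, Vx)` and `y = (Uy, Vy)` of the
balanced complete bipartite subgraph problem are adjacent iff the subgraphs
have no common parts, or they coincide in one part and differ in exactly
one vertex in the other part. -/
theorem wbcbs_adjacency (n k : ℕ) (hk : 1 ≤ k) (hkn : k < n)
    (Ux Vx Uy Vy : Finset (Fin n))
    (hUx : Ux.card = k) (hVx : Vx.card = k) (hUy : Uy.card = k) (hVy : Vy.card = k)
    (hne : (Ux, Vx) ≠ (Uy, Vy)) :
    (∃ c : Fin n → Fin n → ℝ,
        weight c Ux Vx = weight c Uy Vy ∧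
        ∀ Uz Vz : Finset (Fin n), Uz.card = k → Vz.card = k →
          (Uz, Vz) ≠ (Ux, Vx) → (Uz, Vz) ≠ (Uy, Vy) →
          weight c Uz Vz < weight c Ux Vx)
    ↔ ((Ux ≠ Uy ∧ Vx ≠ Vy) ∨
        (Ux = Uy ∧ (Vx \ Vy).card = 1) ∨
        (Vx = Vy ∧ (Ux \ Uy).card = 1)) := by
  constructor
  · rintro ⟨c, hcw, hmax⟩
    by_contra hcon
    push_neg at hcon
    obtain ⟨hA, hB, hC⟩ := hcon
    by_cases hU : Ux = Uy
    · subst hU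
      have hV : Vx ≠ Vy := fun h => hne (by rw [h])
      have h1 : (Vx \ Vy).card ≠ 1 := hB rfl
      have h0 : (Vx \ Vy).card ≠ 0 := by
        intro h0
        apply hV
        have : Vx \ Vy = ∅ := Finset.card_eq_zero.mp h0
        exact Finset.eq_of_subset_of_card_le (Finset.sdiff_eq_empty_iff_subset.mp this) (by omega)
      exact exchange Ux Vx Vy hUx hVx hVy (by omega) c hcw hmax
    · by_cases hV : Vx = Vy
      · subst hV
        have h1 : (Ux \ Uy).card ≠ 1 := hC rfl
        have h0 : (Ux \ Uy).card ≠ 0 := by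
          intro h0
          apply hU
          have : Ux \ Uy = ∅ := Finset.card_eq_zero.mp h0
          exact Finset.eq_of_subset_of_card_le (Finset.sdiff_eq_empty_iff_subset.mp this) (by omega)
        refine exchange Vx Ux Uy hVx hUx hUy (by omega) (fun i j => c j i)
          ((weight_flip c Ux Vx).trans (hcw.trans (weight_flip c Uy Vx).symm)) ?_
        intro Uz Vz hUz hVz hne1 hne2
        have g1 : (Vz, Uz) ≠ (Ux, Vx) := by
          intro h'
          exact hne1 (by simp [Prod.ext_iff] at h' ⊢; exact ⟨h'.2, h'.1⟩)
        have g2 : (Vz, Uz) ≠ (Uy, Vx) := by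
          intro h'
          exact hne2 (by simp [Prod.ext_iff] at h' ⊢; exact ⟨h'.2, h'.1⟩)
        calc weight (fun i j => c j i) Uz Vz = weight c Vz Uz := weight_flip c Vz Uz
          _ < weight c Ux Vx := hmax Vz Uz hVz hUz g1 g2
          _ = weight (fun i j => c j i) Vx Ux := (weight_flip c Ux Vx).symm
      · exact hV (hA hU)
  · intro h
    refine ⟨fun i j =>
      (((k:ℝ)*k+1)+1) * ((if i ∈ Ux then (1:ℝ) else 0) * (if j ∈ Vx then (1:ℝ) else 0))
      + (((k:ℝ)*k+1)+1) * ((if i ∈ Uy then (1:ℝ) else 0) * (if j ∈ Vy then (1:ℝ) else 0))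
      - ((k:ℝ)*k+1) * ((if i ∈ Ux ∩ Uy then (1:ℝ) else 0) * (if j ∈ Vx ∩ Vy then (1:ℝ) else 0))
      - ((k:ℝ)*k+1), ?_, ?_⟩
    · have c1 : Ux ∩ (Ux ∩ Uy) = Ux ∩ Uy := by rw [← Finset.inter_assoc, Finset.inter_self]
      have c2 : Uy ∩ (Ux ∩ Uy) = Ux ∩ Uy := by
        rw [Finset.inter_comm Ux Uy, ← Finset.inter_assoc, Finset.inter_self]
      have c3 : Vx ∩ (Vx ∩ Vy) = Vx ∩ Vy := by rw [← Finset.inter_assoc, Finset.inter_self]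
      have c4 : Vy ∩ (Vx ∩ Vy) = Vx ∩ Vy := by
        rw [Finset.inter_comm Vx Vy, ← Finset.inter_assoc, Finset.inter_self]
      have c5 : Uy ∩ Ux = Ux ∩ Uy := Finset.inter_comm _ _
      have c6 : Vy ∩ Vx = Vx ∩ Vy := Finset.inter_comm _ _
      rw [weight_expand Ux Vx Uy Vy ((k:ℝ)*k+1) Ux Vx,
        weight_expand Ux Vx Uy Vy ((k:ℝ)*k+1) Uy Vy,
        c1, c2, c3, c4, c5, c6, Finset.inter_self, Finset.inter_self, Finset.inter_self,
        Finset.inter_self, hUx, hVx, hUy, hVy]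
      ring
    · intro Uz Vz hUz hVz hzx hzy
      have c1 : Ux ∩ (Ux ∩ Uy) = Ux ∩ Uy := by rw [← Finset.inter_assoc, Finset.inter_self]
      have c3 : Vx ∩ (Vx ∩ Vy) = Vx ∩ Vy := by rw [← Finset.inter_assoc, Finset.inter_self]
      rw [weight_expand Ux Vx Uy Vy ((k:ℝ)*k+1) Uz Vz,
        weight_expand Ux Vx Uy Vy ((k:ℝ)*k+1) Ux Vx,
        c1, c3, Finset.inter_self, Finset.inter_self, hUx, hVx, hUz, hVz]
      refine numeric _ rfl (keycard Ux Vx Uy Vy Uz Vz) ?_ ?_ ?_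
      · exact le_of_le_of_eq (Finset.card_le_card
          (Finset.inter_subset_left : Uz ∩ (Ux ∩ Uy) ⊆ Uz)) hUz
      · exact le_of_le_of_eq (Finset.card_le_card
          (Finset.inter_subset_left : Vz ∩ (Vx ∩ Vy) ⊆ Vz)) hVz
      · have hEle : ((Uz ×ˢ Vz) ∩ (Ux ×ˢ Vx ∪ Uy ×ˢ Vy)).card ≤ k * k := by
          have h1 := Finset.card_le_card
            (Finset.inter_subset_left : (Uz ×ˢ Vz) ∩ (Ux ×ˢ Vx ∪ Uy ×ˢ Vy) ⊆ Uz ×ˢ Vz)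
          rwa [Finset.card_product, hUz, hVz] at h1
        rcases hEle.lt_or_eq with hE | hE
        · exact Or.inl hE
        right
        refine ⟨hE, ?_⟩
        have hsub : Uz ×ˢ Vz ⊆ Ux ×ˢ Vx ∪ Uy ×ˢ Vy := by
          apply subset_of_eq_keycard
          rw [Finset.card_product, hUz, hVz]
          exact hE
        have hUzne : Uz.Nonempty := Finset.card_pos.mp (by omega)
        have hVzne : Vz.Nonempty := Finset.card_pos.mp (by omega)
        have hmem : ∀ i ∈ Uz, ∀ j ∈ Vz, (i ∈ Ux ∧ j ∈ Vx) ∨ (i ∈ Uy ∧ j ∈ Vy) := by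
          intro i hi j hj
          simpa [Finset.mem_union, Finset.mem_product] using hsub (Finset.mk_mem_product hi hj)
        rcases h with ⟨h1, h2⟩ | ⟨h1, h2⟩ | ⟨h1, h2⟩
        · rcases caseA hk hUx hVx hUy hVy hUz hVz h1 h2 hsub with ⟨e1, e2⟩ | ⟨e1, e2⟩
          · exact absurd (by rw [e1, e2]) hzx
          · exact absurd (by rw [e1, e2]) hzy
        · -- Ux = Uy, |Vx \ Vy| = 1
          have hUzsub : Uz ⊆ Ux := by
            intro i hi
            obtain ⟨j, hj⟩ := hVzne
            rcases hmem i hi j hj with ⟨h', _⟩ | ⟨h', _⟩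
            · exact h'
            · rw [h1]; exact h'
          have hUzeq : Uz = Ux := Finset.eq_of_subset_of_card_le hUzsub (by omega)
          have hVsub : Vz ⊆ Vx ∪ Vy := by
            intro j hj
            obtain ⟨i, hi⟩ := hUzne
            rcases hmem i hi j hj with ⟨_, h'⟩ | ⟨_, h'⟩
            · exact Finset.mem_union_left _ h'
            · exact Finset.mem_union_right _ h'
          have hVzx : Vz ≠ Vx := fun h' => hzx (by rw [hUzeq, h'])
          have hVzy : Vz ≠ Vy := fun h' => hzy (by rw [hUzeq, h1, h'])
          have hblt := oneDiff hVx hVy hVz h2 hVsub hVzx hVzy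
          have ha2 : Uz ∩ (Ux ∩ Uy) = Ux := by rw [hUzeq, ← h1, Finset.inter_self, Finset.inter_self]
          have hp : Ux ∩ Uy = Ux := by rw [← h1, Finset.inter_self]
          rw [ha2, hp, hUx]
          exact (mul_lt_mul_iff_right₀ (by omega : 0 < k)).mpr hblt
        · -- Vx = Vy, |Ux \ Uy| = 1
          have hVzsub : Vz ⊆ Vx := by
            intro j hj
            obtain ⟨i, hi⟩ := hUzne
            rcases hmem i hi j hj with ⟨_, h'⟩ | ⟨_, h'⟩
            · exact h'
            · rw [h1]; exact h'
          have hVzeq : Vz = Vx := Finset.eq_of_subset_of_card_le hVzsub (by omega)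
          have hUsub : Uz ⊆ Ux ∪ Uy := by
            intro i hi
            obtain ⟨j, hj⟩ := hVzne
            rcases hmem i hi j hj with ⟨h', _⟩ | ⟨h', _⟩
            · exact Finset.mem_union_left _ h'
            · exact Finset.mem_union_right _ h'
          have hUzx : Uz ≠ Ux := fun h' => hzx (by rw [hVzeq, h'])
          have hUzy : Uz ≠ Uy := fun h' => hzy (by rw [hVzeq, h1, h'])
          have halt := oneDiff hUx hUy hUz h2 hUsub hUzx hUzy
          have hb2 : Vz ∩ (Vx ∩ Vy) = Vx := by rw [hVzeq, ← h1, Finset.inter_self, Finset.inter_self]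
          have hq : Vx ∩ Vy = Vx := by rw [← h1, Finset.inter_self]
          rw [hb2, hq, hVx]
          exact (mul_lt_mul_iff_left₀ (by omega : 0 < k)).mpr halt
end

section
/- Let 1 ≤ k ≤ n and let x = (U_x, V_x) and y = (U_y, V_y) be feasible solutions of the balanced complete bipartite subgraph problem with U_x ≠ U_y and V_x ≠ V_y. Define c : Fin n → Fin n → ℝ by c i j = 1 if (i ∈ U_x and j ∈ V_x) or (i ∈ U_y and j ∈ V_y), and c i j = 0 otherwise. Then w_c(x) = w_c(y) = k², and w_c(z) < k² for every feasible solution z distinct from both x and y. In particular x and y are adjacent, and the separating weight vector can be chosen nonnegative with values in {0, 1}. -/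
open Finset

/-- If two feasible solutions `x = (Ux, Vx)`, `y = (Uy, Vy)` of the balanced
complete bipartite subgraph problem have no common parts (`Ux ≠ Uy` and
`Vx ≠ Vy`), then the nonnegative 0/1 weight function `c` with `c i j = 1`
exactly on the edges of `x` and `y` gives both of them weight `k²` and gives
every other feasible solution strictly smaller weight; in particular `x` and
`y` are adjacent, via a nonnegative weight vector with values in `{0, 1}`. -/
theorem wbcbs_adjacent_of_no_common_parts (n k : ℕ) (hk : 1 ≤ k) (hkn : k ≤ n)
    (Ux Vx Uy Vy : Finset (Fin n))
    (hUx : Ux.card = k) (hVx : Vx.card = k) (hUy : Uy.card = k) (hVy : Vy.card = k)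
    (hU : Ux ≠ Uy) (hV : Vx ≠ Vy)
    (c : Fin n → Fin n → ℝ)
    (hc : ∀ i j, c i j = if (i ∈ Ux ∧ j ∈ Vx) ∨ (i ∈ Uy ∧ j ∈ Vy) then 1 else 0) :
    weight c Ux Vx = (k : ℝ) ^ 2 ∧
    weight c Uy Vy = (k : ℝ) ^ 2 ∧
    (∀ Uz Vz : Finset (Fin n), Uz.card = k → Vz.card = k →
      (Uz, Vz) ≠ (Ux, Vx) → (Uz, Vz) ≠ (Uy, Vy) →
      weight c Uz Vz < (k : ℝ) ^ 2) ∧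
    (∀ i j, 0 ≤ c i j) ∧ (∀ i j, c i j = 0 ∨ c i j = 1) := by
  have hwx : weight c Ux Vx = (k : ℝ) ^ 2 := by
    unfold weight
    have h1 : ∀ i ∈ Ux, (∑ j ∈ Vx, c i j) = (k : ℝ) := by
      intro i hi
      rw [Finset.sum_congr rfl (fun j hj => by rw [hc, if_pos (Or.inl ⟨hi, hj⟩)])]
      simp [hVx]
    rw [Finset.sum_congr rfl h1]
    simp [hUx]; ring
  have hwy : weight c Uy Vy = (k : ℝ) ^ 2 := by
    unfold weight
    have h1 : ∀ i ∈ Uy, (∑ j ∈ Vy, c i j) = (k : ℝ) := by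
      intro i hi
      rw [Finset.sum_congr rfl (fun j hj => by rw [hc, if_pos (Or.inr ⟨hi, hj⟩)])]
      simp [hVy]
    rw [Finset.sum_congr rfl h1]
    simp [hUy]; ring
  refine ⟨hwx, hwy, ?_, fun i j => by rw [hc]; split <;> norm_num,
    fun i j => by rw [hc]; split <;> simp⟩
  intro Uz Vz hUz hVz hzx hzy
  -- there is a pair in Uz × Vz not covered by x or y
  have key : ∃ i ∈ Uz, ∃ j ∈ Vz, ¬((i ∈ Ux ∧ j ∈ Vx) ∨ (i ∈ Uy ∧ j ∈ Vy)) := by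
    by_contra hcon
    push_neg at hcon
    -- hcon : ∀ i ∈ Uz, ∀ j ∈ Vz, covered
    by_cases hsub : Uz ⊆ Ux
    · have hUzx : Uz = Ux := Finset.eq_of_subset_of_card_le hsub (by rw [hUz, hUx])
      have hnsub : ¬ Ux ⊆ Uy := fun h => hU (Finset.eq_of_subset_of_card_le h (by rw [hUx, hUy]))
      obtain ⟨i, hiUx, hiUy⟩ := Finset.not_subset.mp hnsub
      have hVsub : Vz ⊆ Vx := by
        intro j hj
        rcases hcon i (hUzx ▸ hiUx) j hj with ⟨_, h⟩ | ⟨h, _⟩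
        · exact h
        · exact absurd h hiUy
      have : Vz = Vx := Finset.eq_of_subset_of_card_le hVsub (by rw [hVz, hVx])
      exact hzx (by rw [hUzx, this])
    · obtain ⟨i₁, hi₁Uz, hi₁Ux⟩ := Finset.not_subset.mp hsub
      have hVsub : Vz ⊆ Vy := by
        intro j hj
        rcases hcon i₁ hi₁Uz j hj with ⟨h, _⟩ | ⟨_, h⟩
        · exact absurd h hi₁Ux
        · exact h
      have hVzy : Vz = Vy := Finset.eq_of_subset_of_card_le hVsub (by rw [hVz, hVy])
      have hnsub : ¬ Vy ⊆ Vx := fun h => hV ((Finset.eq_of_subset_of_card_le h (by rw [hVy, hVx])).symm)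
      obtain ⟨j, hjVy, hjVx⟩ := Finset.not_subset.mp hnsub
      have hUsub : Uz ⊆ Uy := by
        intro i hi
        rcases hcon i hi j (hVzy ▸ hjVy) with ⟨_, h⟩ | ⟨h, _⟩
        · exact absurd h hjVx
        · exact h
      have : Uz = Uy := Finset.eq_of_subset_of_card_le hUsub (by rw [hUz, hUy])
      exact hzy (by rw [this, hVzy])
  unfold weight
  rw [← Finset.sum_product']
  have hcard : (Uz ×ˢ Vz).card = k * k := by rw [Finset.card_product, hUz, hVz]
  have hlt : ∑ p ∈ Uz ×ˢ Vz, c p.1 p.2 < ∑ _p ∈ Uz ×ˢ Vz, (1 : ℝ) := by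
    apply Finset.sum_lt_sum
    · intro p _
      rw [hc]; split <;> norm_num
    · obtain ⟨i, hi, j, hj, hnp⟩ := key
      exact ⟨(i, j), Finset.mk_mem_product hi hj, by rw [hc]; simp [hnp]⟩
  calc ∑ p ∈ Uz ×ˢ Vz, c p.1 p.2 < ∑ _p ∈ Uz ×ˢ Vz, (1 : ℝ) := hlt
    _ = (k : ℝ) ^ 2 := by simp [hcard]; ring
end

section
/- Let 1 ≤ k ≤ n and let x = (U_x, V_x) and y = (U_y, V_y) be distinct feasible solutions of the balanced complete bipartite subgraph problem with V_x = V_y and |U_x \ U_y| = 1. Define c : Fin n → Fin n → ℝ by c i j = 1 if i ∈ U_x ∩ U_y and j ∈ V_x; c i j = 0 if i ∈ U_x △ U_y (symmetric difference) and j ∈ V_x; and c i j = −1 otherwise. Then w_c(x) = w_c(y) = k(k−1), and w_c(z) < k(k−1) for every feasible solution z distinct from both x and y; in particular x and y are adjacent. -/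
open Finset

lemma wbcbs_nat_bound (a b v k : ℕ) (hk : 1 ≤ k) (ha : a + 1 ≤ k) (hb : b ≤ k)
    (hv : v ≤ k) (h : v < k ∨ a + 1 < k ∨ b < k) : (a + b) * v + k < 2 * (k * k) := by
  rcases h with h | h | h <;> nlinarith


lemma wbcbs_weight_eq {n : ℕ} (Ux Vx Uy : Finset (Fin n)) (c : Fin n → Fin n → ℝ)
    (hc : ∀ i j, c i j =
      if i ∈ Ux ∩ Uy ∧ j ∈ Vx then 1
      else if i ∈ (Ux \ Uy) ∪ (Uy \ Ux) ∧ j ∈ Vx then 0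
      else -1)
    (U V : Finset (Fin n)) :
    weight c U V = (((U ∩ (Ux ∩ Uy)).card : ℝ) + ((U ∩ (Ux ∪ Uy)).card : ℝ))
        * ((V ∩ Vx).card : ℝ) - (U.card : ℝ) * V.card := by
  have hc' : ∀ i j, c i j =
      ((if i ∈ Ux ∩ Uy then (1:ℝ) else 0) + (if i ∈ Ux ∪ Uy then (1:ℝ) else 0))
        * (if j ∈ Vx then (1:ℝ) else 0) - 1 := by
    intro i j
    rw [hc]
    simp only [Finset.mem_inter, Finset.mem_union, Finset.mem_sdiff]
    split_ifs <;> first | tauto | norm_num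
  unfold weight
  simp only [hc', Finset.sum_sub_distrib, Finset.sum_const, nsmul_eq_mul, mul_one]
  rw [show (((U ∩ (Ux ∩ Uy)).card : ℝ) + ((U ∩ (Ux ∪ Uy)).card : ℝ)) =
      ∑ i ∈ U, ((if i ∈ Ux ∩ Uy then (1:ℝ) else 0) + (if i ∈ Ux ∪ Uy then (1:ℝ) else 0)) by
    rw [Finset.sum_add_distrib, Finset.sum_ite_mem, Finset.sum_ite_mem]; simp]
  rw [show ((V ∩ Vx).card : ℝ) = ∑ j ∈ V, (if j ∈ Vx then (1:ℝ) else 0) by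
    rw [Finset.sum_ite_mem]; simp]
  rw [Finset.sum_mul_sum]

/-- If two distinct feasible solutions `x = (Ux, Vx)`, `y = (Uy, Vy)` of the
balanced complete bipartite subgraph problem coincide in the right part
(`Vx = Vy`) and differ in exactly one vertex in the left part
(`|Ux \ Uy| = 1`), then the weight function `c` equal to `1` on
`(Ux ∩ Uy) × Vx`, `0` on `(Ux △ Uy) × Vx`, and `−1` elsewhere gives both `x`
and `y` weight `k(k−1)` and every other feasible solution strictly smaller
weight; in particular `x` and `y` are adjacent. -/
theorem wbcbs_adjacent_of_common_part (n k : ℕ) (hk : 1 ≤ k) (hkn : k ≤ n)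
    (Ux Vx Uy Vy : Finset (Fin n))
    (hUx : Ux.card = k) (hVx : Vx.card = k) (hUy : Uy.card = k) (hVy : Vy.card = k)
    (hne : (Ux, Vx) ≠ (Uy, Vy))
    (hV : Vx = Vy) (hU1 : (Ux \ Uy).card = 1)
    (c : Fin n → Fin n → ℝ)
    (hc : ∀ i j, c i j =
      if i ∈ Ux ∩ Uy ∧ j ∈ Vx then 1
      else if i ∈ (Ux \ Uy) ∪ (Uy \ Ux) ∧ j ∈ Vx then 0
      else -1) :
    weight c Ux Vx = (k : ℝ) * ((k : ℝ) - 1) ∧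
    weight c Uy Vy = (k : ℝ) * ((k : ℝ) - 1) ∧
    ∀ Uz Vz : Finset (Fin n), Uz.card = k → Vz.card = k →
      (Uz, Vz) ≠ (Ux, Vx) → (Uz, Vz) ≠ (Uy, Vy) →
      weight c Uz Vz < (k : ℝ) * ((k : ℝ) - 1) := by
  have key := wbcbs_weight_eq Ux Vx Uy c hc
  have hA : (Ux ∩ Uy).card + 1 = k := by
    have h := Finset.card_sdiff_add_card_inter Ux Uy
    omega
  have hAr : ((Ux ∩ Uy).card : ℝ) = (k : ℝ) - 1 := by
    rw [← hA]; push_cast; ring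
  have e1 : Ux ∩ (Ux ∩ Uy) = Ux ∩ Uy := by ext a; simp only [Finset.mem_inter]; tauto
  have e2 : Ux ∩ (Ux ∪ Uy) = Ux := by ext a; simp only [Finset.mem_inter, Finset.mem_union]; tauto
  have e3 : Uy ∩ (Ux ∩ Uy) = Ux ∩ Uy := by ext a; simp only [Finset.mem_inter]; tauto
  have e4 : Uy ∩ (Ux ∪ Uy) = Uy := by ext a; simp only [Finset.mem_inter, Finset.mem_union]; tauto
  refine ⟨?_, ?_, ?_⟩
  · rw [key, e1, e2, Finset.inter_self, hAr, hUx, hVx]; ring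
  · rw [key, e3, e4, ← hV, Finset.inter_self, hAr, hUy, hVx]; ring
  · intro Uz Vz hUz hVz hzx hzy
    rw [key, hUz, hVz]
    set a := (Uz ∩ (Ux ∩ Uy)).card with ha_def
    set b := (Uz ∩ (Ux ∪ Uy)).card with hb_def
    set v := (Vz ∩ Vx).card with hv_def
    have ha : a + 1 ≤ k := by
      have : a ≤ (Ux ∩ Uy).card := Finset.card_le_card (Finset.inter_subset_right)
      omega
    have hb : b ≤ k := by
      have : b ≤ Uz.card := Finset.card_le_card (Finset.inter_subset_left)
      omega
    have hv : v ≤ k := by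
      have : v ≤ Vz.card := Finset.card_le_card (Finset.inter_subset_left)
      omega
    have hcase : v < k ∨ a + 1 < k ∨ b < k := by
      by_contra hcon
      push_neg at hcon
      obtain ⟨h1, h2, h3⟩ := hcon
      have hveq : v = k := le_antisymm hv h1
      have haeq : a = (Ux ∩ Uy).card := by omega
      have hbeq : b = k := le_antisymm hb h3
      -- Vz = Vx
      have hVzx : Vz = Vx := by
        have hs : Vz ∩ Vx = Vz :=
          Finset.eq_of_subset_of_card_le (Finset.inter_subset_left) (by omega)
        have : Vz ⊆ Vx := by rw [← hs]; exact Finset.inter_subset_right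
        exact Finset.eq_of_subset_of_card_le this (by omega)
      -- Ux ∩ Uy ⊆ Uz
      have hAz : Ux ∩ Uy ⊆ Uz := by
        have hs : Uz ∩ (Ux ∩ Uy) = Ux ∩ Uy :=
          Finset.eq_of_subset_of_card_le (Finset.inter_subset_right) (by omega)
        rw [← hs]; exact Finset.inter_subset_left
      -- Uz ⊆ Ux ∪ Uy
      have hzU : Uz ⊆ Ux ∪ Uy := by
        have hs : Uz ∩ (Ux ∪ Uy) = Uz :=
          Finset.eq_of_subset_of_card_le (Finset.inter_subset_left) (by omega)
        rw [← hs]; exact Finset.inter_subset_right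
      have hzx' : Uz ≠ Ux := fun h => hzx (by rw [h, hVzx])
      have hnsub : ¬ Uz ⊆ Ux := fun h =>
        hzx' (Finset.eq_of_subset_of_card_le h (by omega))
      obtain ⟨u, hu, hnu⟩ := Finset.not_subset.mp hnsub
      have huy : u ∈ Uy := by
        rcases Finset.mem_union.mp (hzU hu) with h | h
        · exact absurd h hnu
        · exact h
      have hunA : u ∉ Ux ∩ Uy := fun h => hnu (Finset.mem_inter.mp h).1
      have hins : insert u (Ux ∩ Uy) ⊆ Uz := Finset.insert_subset hu hAz
      have hcard : (insert u (Ux ∩ Uy)).card = k := by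
        rw [Finset.card_insert_of_notMem hunA]; omega
      have hUz_eq : Uz = insert u (Ux ∩ Uy) :=
        (Finset.eq_of_subset_of_card_le hins (by omega)).symm
      have hins' : insert u (Ux ∩ Uy) ⊆ Uy :=
        Finset.insert_subset huy (Finset.inter_subset_right)
      have hUy_eq : Uy = insert u (Ux ∩ Uy) :=
        (Finset.eq_of_subset_of_card_le hins' (by omega)).symm
      exact hzy (by rw [hUz_eq, ← hUy_eq, hVzx, hV])
    have hnat := wbcbs_nat_bound a b v k hk ha hb hv hcase
    have : ((a + b) * v + k : ℝ) < 2 * (k * k) := by exact_mod_cast hnat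
    push_cast at this
    nlinarith [this]
end

section
/- Let 1 ≤ k ≤ n and let x = (U_x, V_x) and y = (U_y, V_y) be feasible solutions of the balanced complete bipartite subgraph problem with V_x = V_y and |U_x \ U_y| ≥ 2. Then for every weight function c : Fin n → Fin n → ℝ there exists a feasible solution z distinct from both x and y with w_c(z) ≥ min(w_c(x), w_c(y)). Consequently, x and y are not adjacent: there is no c with w_c(x) = w_c(y) and w_c(z) < w_c(x) for all feasible z ∉ {x, y}. -/
open Finset

/-- If two feasible solutions `x = (Ux, Vx)`, `y = (Uy, Vy)` of the balanced
complete bipartite subgraph problem coincide in the right part (`Vx = Vy`)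
but differ in at least two vertices in the left part (`|Ux \ Uy| ≥ 2`), then
for every weight function `c` some other feasible solution has weight at
least `min (w_c x) (w_c y)`; consequently `x` and `y` are not adjacent. -/
theorem wbcbs_not_adjacent (n k : ℕ) (hk : 1 ≤ k) (hkn : k ≤ n)
    (Ux Vx Uy Vy : Finset (Fin n))
    (hUx : Ux.card = k) (hVx : Vx.card = k) (hUy : Uy.card = k) (hVy : Vy.card = k)
    (hV : Vx = Vy) (hU2 : 2 ≤ (Ux \ Uy).card) :
    (∀ c : Fin n → Fin n → ℝ,
      ∃ Uz Vz : Finset (Fin n), Uz.card = k ∧ Vz.card = k ∧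
        (Uz, Vz) ≠ (Ux, Vx) ∧ (Uz, Vz) ≠ (Uy, Vy) ∧
        min (weight c Ux Vx) (weight c Uy Vy) ≤ weight c Uz Vz) ∧
    ¬ ∃ c : Fin n → Fin n → ℝ,
        weight c Ux Vx = weight c Uy Vy ∧
        ∀ Uz Vz : Finset (Fin n), Uz.card = k → Vz.card = k →
          (Uz, Vz) ≠ (Ux, Vx) → (Uz, Vz) ≠ (Uy, Vy) →
          weight c Uz Vz < weight c Ux Vx := by
  have key : ∀ c : Fin n → Fin n → ℝ,
      ∃ Uz Vz : Finset (Fin n), Uz.card = k ∧ Vz.card = k ∧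
        (Uz, Vz) ≠ (Ux, Vx) ∧ (Uz, Vz) ≠ (Uy, Vy) ∧
        min (weight c Ux Vx) (weight c Uy Vy) ≤ weight c Uz Vz := by
    intro c
    set row : Fin n → ℝ := fun i => ∑ j ∈ Vx, c i j with hrow
    have hcard' : (Uy \ Ux).card = (Ux \ Uy).card :=
      Finset.card_sdiff_comm (hUy.trans hUx.symm)
    obtain ⟨a, ha, hamin⟩ := (Ux \ Uy).exists_min_image row
      (Finset.card_pos.mp (by omega))
    obtain ⟨b, hb, hbmax⟩ := (Uy \ Ux).exists_max_image row
      (Finset.card_pos.mp (by omega))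
    obtain ⟨a', ha'⟩ : ((Ux \ Uy).erase a).Nonempty :=
      Finset.card_pos.mp (by rw [Finset.card_erase_of_mem ha]; omega)
    have haUx : a ∈ Ux := (Finset.mem_sdiff.mp ha).1
    have haUy : a ∉ Uy := (Finset.mem_sdiff.mp ha).2
    have hbUy : b ∈ Uy := (Finset.mem_sdiff.mp hb).1
    have hbUx : b ∉ Ux := (Finset.mem_sdiff.mp hb).2
    have ha'a : a' ≠ a := (Finset.mem_erase.mp ha').1
    have ha'Ux : a' ∈ Ux := (Finset.mem_sdiff.mp (Finset.mem_erase.mp ha').2).1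
    have ha'Uy : a' ∉ Uy := (Finset.mem_sdiff.mp (Finset.mem_erase.mp ha').2).2
    refine ⟨insert b (Ux.erase a), Vx, ?_, hVx, ?_, ?_, ?_⟩
    · rw [Finset.card_insert_of_notMem (fun h => hbUx (Finset.mem_of_mem_erase h)),
        Finset.card_erase_of_mem haUx, hUx]
      omega
    · intro h
      have hU : insert b (Ux.erase a) = Ux := congrArg Prod.fst h
      exact hbUx (hU ▸ Finset.mem_insert_self _ _)
    · intro h
      have hU : insert b (Ux.erase a) = Uy := congrArg Prod.fst h
      exact ha'Uy (hU ▸ Finset.mem_insert_of_mem (Finset.mem_erase.mpr ⟨ha'a, ha'Ux⟩))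
    · have hwz : weight c (insert b (Ux.erase a)) Vx
          = row b + (weight c Ux Vx - row a) := by
        unfold weight
        rw [Finset.sum_insert (fun h => hbUx (Finset.mem_of_mem_erase h))]
        have := Finset.add_sum_erase Ux row haUx
        simp only [hrow] at this ⊢
        linarith
      have hx : weight c Ux Vx = ∑ i ∈ Ux ∩ Uy, row i + ∑ i ∈ Ux \ Uy, row i :=
        (Finset.sum_inter_add_sum_sdiff Ux Uy row).symm
      have hy : weight c Uy Vy = ∑ i ∈ Ux ∩ Uy, row i + ∑ i ∈ Uy \ Ux, row i := by
        unfold weight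
        rw [← hV, Finset.inter_comm]
        exact (Finset.sum_inter_add_sum_sdiff Uy Ux row).symm
      set m : ℕ := (Ux \ Uy).card with hm
      have hS : (m : ℝ) * row a ≤ ∑ i ∈ Ux \ Uy, row i := by
        have := Finset.card_nsmul_le_sum (Ux \ Uy) row (row a) hamin
        simpa [nsmul_eq_mul] using this
      have hT : ∑ i ∈ Uy \ Ux, row i ≤ (m : ℝ) * row b := by
        have := Finset.sum_le_card_nsmul (Uy \ Ux) row (row b) hbmax
        rw [hcard'] at this
        simpa [nsmul_eq_mul] using this
      have hm2 : (2 : ℝ) ≤ (m : ℝ) := by exact_mod_cast hU2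
      rw [hwz, hx, hy]
      rcases le_total (∑ i ∈ Ux \ Uy, row i) (∑ i ∈ Uy \ Ux, row i) with h | h
      · rw [min_eq_left (by linarith)]
        nlinarith
      · rw [min_eq_right (by linarith)]
        nlinarith
  refine ⟨key, ?_⟩
  rintro ⟨c, hceq, hclt⟩
  obtain ⟨Uz, Vz, h1, h2, h3, h4, h5⟩ := key c
  have := hclt Uz Vz h1 h2 h3 h4
  rw [hceq, min_self] at h5
  rw [hceq] at this
  linarith
end

section
/- Let 1 ≤ k ≤ n. The diagonal family Y_{n,k} = { (A, A) : A ⊆ Fin n, |A| = k } consists of C(n, k) feasible solutions of the balanced complete bipartite subgraph problem, and any two distinct members of Y_{n,k} are adjacent. Consequently, the clique number of the 1-skeleton of the polytope WBCBS(n,k) is at least the binomial coefficient C(n, k): there exists a family of C(n, k) pairwise adjacent feasible solutions. -/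
open Finset

/-- The diagonal family `Y_{n,k} = {(A, A) : A ⊆ Fin n, |A| = k}`. -/
def diagFamily (n k : ℕ) : Finset (Finset (Fin n) × Finset (Fin n)) :=
  (Finset.powersetCard k (Finset.univ : Finset (Fin n))).image (fun A => (A, A))

lemma key_int (a b k t : ℤ) (ha0 : 0 ≤ a) (hb0 : 0 ≤ b) (ht0 : 0 ≤ t)
    (ha : a < k) (hb : b < k) (hab : a + b ≤ k + t) :
    a^2 + b^2 < k^2 + t^2 := by
  rcases le_or_gt b t with h | h
  · nlinarith [mul_nonneg (by linarith : (0:ℤ) ≤ k-1-a) (by linarith : (0:ℤ) ≤ k-1+a),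
      mul_nonneg (by linarith : (0:ℤ) ≤ t-b) (by linarith : (0:ℤ) ≤ t+b)]
  · nlinarith [mul_pos (by linarith : (0:ℤ) < k-b) (by linarith : (0:ℤ) < b-t),
      mul_nonneg (by linarith : (0:ℤ) ≤ k+t-b-a) (by linarith : (0:ℤ) ≤ k+t-b+a)]

lemma indsum {n : ℕ} (S W : Finset (Fin n)) :
    ∑ i ∈ S, (if i ∈ W then (1:ℝ) else 0) = (S ∩ W).card := by
  rw [Finset.sum_ite_mem]; simp

lemma weight_split {n : ℕ} (A B U V : Finset (Fin n)) (M : ℝ) :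
    weight (fun i j => (if i = j then M else 0) + (if i ∈ A then (1:ℝ) else 0) * (if j ∈ A then 1 else 0) + (if i ∈ B then (1:ℝ) else 0) * (if j ∈ B then 1 else 0)) U V
    = M * (U ∩ V).card + (U ∩ A).card * (V ∩ A).card + (U ∩ B).card * (V ∩ B).card := by
  have e : ∀ i ∈ U, ∑ j ∈ V, ((if i = j then M else 0) + (if i ∈ A then (1:ℝ) else 0) * (if j ∈ A then 1 else 0) + (if i ∈ B then (1:ℝ) else 0) * (if j ∈ B then 1 else 0))
      = (if i ∈ V then M else 0) + (if i ∈ A then (1:ℝ) else 0) * (V ∩ A).card + (if i ∈ B then (1:ℝ) else 0) * (V ∩ B).card := by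
    intro i _
    rw [Finset.sum_add_distrib, Finset.sum_add_distrib, ← Finset.mul_sum, ← Finset.mul_sum,
      indsum, indsum, Finset.sum_ite_eq V i (fun _ => M)]
  rw [weight, Finset.sum_congr rfl e, Finset.sum_add_distrib, Finset.sum_add_distrib,
    Finset.sum_ite_mem, Finset.sum_const, ← Finset.sum_mul, ← Finset.sum_mul,
    indsum, indsum]
  ring

lemma inter_card_lt {n k : ℕ} {U A : Finset (Fin n)} (hU : U.card = k) (hA : A.card = k)
    (hne : U ≠ A) : (U ∩ A).card < k := by
  rcases lt_or_ge (U ∩ A).card k with h | h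
  · exact h
  · exfalso
    have h1 : U ∩ A = U := Finset.eq_of_subset_of_card_le Finset.inter_subset_left (by omega)
    have h2 : U ⊆ A := h1 ▸ Finset.inter_subset_right
    exact hne (Finset.eq_of_subset_of_card_le h2 (by omega))

/-- The diagonal family `Y_{n,k}` consists of `C(n,k)` feasible solutions of
the balanced complete bipartite subgraph problem that are pairwise adjacent;
hence the clique number of the 1-skeleton of `WBCBS(n,k)` is at least
`C(n,k)`. -/

theorem wbcbs_clique_number (n k : ℕ) (hk : 1 ≤ k) (hkn : k ≤ n) :
    (diagFamily n k).card = n.choose k ∧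
    (∀ x ∈ diagFamily n k, x.1.card = k ∧ x.2.card = k) ∧
    (∀ x ∈ diagFamily n k, ∀ y ∈ diagFamily n k, x ≠ y →
      ∃ c : Fin n → Fin n → ℝ,
        weight c x.1 x.2 = weight c y.1 y.2 ∧
        ∀ z : Finset (Fin n) × Finset (Fin n), z.1.card = k → z.2.card = k →
          z ≠ x → z ≠ y → weight c z.1 z.2 < weight c x.1 x.2) := by
  refine ⟨?_, ?_, ?_⟩
  · rw [diagFamily, Finset.card_image_of_injective _ (fun A B h => congrArg Prod.fst h)]
    simp [Finset.card_powersetCard]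
  · intro x hx
    obtain ⟨A, hA, rfl⟩ := Finset.mem_image.1 hx
    have := (Finset.mem_powersetCard_univ).1 hA
    exact ⟨this, this⟩
  · intro x hx y hy hxy
    obtain ⟨A, hA, rfl⟩ := Finset.mem_image.1 hx
    obtain ⟨B, hB, rfl⟩ := Finset.mem_image.1 hy
    have hAk : A.card = k := (Finset.mem_powersetCard_univ).1 hA
    have hBk : B.card = k := (Finset.mem_powersetCard_univ).1 hB
    have hAB : A ≠ B := fun h => hxy (by rw [h])
    set M : ℝ := 2*(k:ℝ)^2 + 1 with hM
    refine ⟨fun i j => (if i = j then M else 0) + (if i ∈ A then (1:ℝ) else 0) * (if j ∈ A then 1 else 0) + (if i ∈ B then (1:ℝ) else 0) * (if j ∈ B then 1 else 0), ?_, ?_⟩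
    · show weight _ A A = weight _ B B
      rw [weight_split A B A A M, weight_split A B B B M, inter_self, inter_self,
        inter_comm B A, hAk, hBk]
      ring
    · rintro ⟨U, V⟩ hU hV hzx hzy
      show weight _ U V < weight _ A A
      rw [weight_split A B U V M, weight_split A B A A M, inter_self]
      have ht : (A ∩ B).card < k := inter_card_lt hAk hBk hAB
      have htk : ((A ∩ B).card : ℝ) ≤ k := by exact_mod_cast ht.le
      have ht0 : (0:ℝ) ≤ ((A ∩ B).card : ℝ) := Nat.cast_nonneg _
      rw [hAk]
      by_cases hUV : U = V
      · subst hUV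
        rw [inter_self, hU]
        have hUA : U ≠ A := fun h => hzx (by rw [h])
        have hUB : U ≠ B := fun h => hzy (by rw [h])
        have ha : (U ∩ A).card < k := inter_card_lt hU hAk hUA
        have hb : (U ∩ B).card < k := inter_card_lt hU hBk hUB
        have hab : (U ∩ A).card + (U ∩ B).card ≤ k + (A ∩ B).card := by
          have := Finset.card_inter_add_card_union (U ∩ A) (U ∩ B)
          have e1 : (U ∩ A) ∩ (U ∩ B) = U ∩ (A ∩ B) := by
            ext i; simp [Finset.mem_inter]; tauto
          have e2 : (U ∩ A) ∪ (U ∩ B) = U ∩ (A ∪ B) := (Finset.inter_union_distrib_left U A B).symm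
          rw [e1, e2] at this
          have b1 : (U ∩ (A ∩ B)).card ≤ (A ∩ B).card :=
            Finset.card_le_card Finset.inter_subset_right
          have b2 : (U ∩ (A ∪ B)).card ≤ k := hU ▸ Finset.card_le_card Finset.inter_subset_left
          omega
        have hkey : ((U ∩ A).card : ℤ)^2 + ((U ∩ B).card : ℤ)^2 < (k:ℤ)^2 + ((A ∩ B).card : ℤ)^2 :=
          key_int _ _ _ _ (Int.ofNat_nonneg _) (Int.ofNat_nonneg _) (Int.ofNat_nonneg _)
            (by exact_mod_cast ha) (by exact_mod_cast hb) (by exact_mod_cast hab)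
        have hkeyR : ((U ∩ A).card : ℝ)^2 + ((U ∩ B).card : ℝ)^2 < (k:ℝ)^2 + ((A ∩ B).card : ℝ)^2 := by
          exact_mod_cast hkey
        nlinarith [hkeyR]
      · have hu : (U ∩ V).card < k := inter_card_lt hU hV hUV
        have huR : ((U ∩ V).card : ℝ) + 1 ≤ k := by exact_mod_cast hu
        have bUA : ((U ∩ A).card : ℝ) ≤ k := by
          have : (U ∩ A).card ≤ U.card := Finset.card_le_card Finset.inter_subset_left
          exact_mod_cast hU ▸ this
        have bVA : ((V ∩ A).card : ℝ) ≤ k := by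
          have : (V ∩ A).card ≤ V.card := Finset.card_le_card Finset.inter_subset_left
          exact_mod_cast hV ▸ this
        have bUB : ((U ∩ B).card : ℝ) ≤ k := by
          have : (U ∩ B).card ≤ U.card := Finset.card_le_card Finset.inter_subset_left
          exact_mod_cast hU ▸ this
        have bVB : ((V ∩ B).card : ℝ) ≤ k := by
          have : (V ∩ B).card ≤ V.card := Finset.card_le_card Finset.inter_subset_left
          exact_mod_cast hV ▸ this
        have n1 : (0:ℝ) ≤ ((U ∩ A).card : ℝ) := Nat.cast_nonneg _
        have n2 : (0:ℝ) ≤ ((V ∩ A).card : ℝ) := Nat.cast_nonneg _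
        have n3 : (0:ℝ) ≤ ((U ∩ B).card : ℝ) := Nat.cast_nonneg _
        have n4 : (0:ℝ) ≤ ((V ∩ B).card : ℝ) := Nat.cast_nonneg _
        have n5 : (0:ℝ) ≤ ((U ∩ V).card : ℝ) := Nat.cast_nonneg _
        have hk1 : (1:ℝ) ≤ (k:ℝ) := by exact_mod_cast hk
        have hMpos : (0:ℝ) < M := by rw [hM]; positivity
        have p1 : ((U ∩ A).card : ℝ) * ((V ∩ A).card : ℝ) ≤ (k:ℝ) * k :=
          mul_le_mul bUA bVA n2 (by linarith)
        have p2 : ((U ∩ B).card : ℝ) * ((V ∩ B).card : ℝ) ≤ (k:ℝ) * k :=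
          mul_le_mul bUB bVB n4 (by linarith)
        have p3 : M * ((U ∩ V).card : ℝ) ≤ M * ((k:ℝ) - 1) :=
          mul_le_mul_of_nonneg_left (by linarith) hMpos.le
        rw [hM] at p3 ⊢
        nlinarith [p1, p2, p3, mul_self_nonneg ((A ∩ B).card : ℝ)]
end

section
/- Let n = 2m be even, let k = 3s be a multiple of 3 with (9/4)·m < k < 3m (equivalently 3m < 4s and s < m). Then there exists a family of C(m, s) feasible solutions of the unbalanced problem on k vertices that are pairwise adjacent in the nonnegative cone decomposition for the minimum problem: for any two distinct members x, y of the family there is a nonnegative weight function c : Fin n → Fin n → ℝ with w_c(x) = w_c(y) and w_c(z) > w_c(x) for every feasible solution z distinct from x and y. Hence the clique number of the graph of the cone decomposition K^min_{n,k} is at least C(m, s). (Concretely, partition each side of K_{n,n} into two halves of size m, each half indexed by Fin m; for every S ⊆ Fin m with |S| = s take the solution whose left part is the copy of S in the first left half and whose right part is the union of the copies of S in both right halves.) -/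
open Finset

lemma exists_cost {n m s t : ℕ} (hn : n = 2 * m) (hm : 3 * m < 4 * s) (hts : t < s)
    (Ux Uy Vx Vy : Finset (Fin n))
    (hUx : Ux.card = s) (hUy : Uy.card = s) (hVx : Vx.card = 2 * s) (hVy : Vy.card = 2 * s)
    (hU : (Ux ∩ Uy).card = t) (hV : (Vx ∩ Vy).card = 2 * t) :
    ∃ c : Fin n → Fin n → ℝ, (∀ i j, 0 ≤ c i j) ∧
      weight c Ux Vx = weight c Uy Vy ∧
      ∀ z : Finset (Fin n) × Finset (Fin n), z.1.card + z.2.card = 3 * s →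
        z ≠ (Ux, Vx) → z ≠ (Uy, Vy) → weight c Ux Vx < weight c z.1 z.2 := by
  classical
  set M : ℝ := 9 * s * s + 1 with hMdef
  have hM0 : (0:ℝ) ≤ M := by positivity
  set c : Fin n → Fin n → ℝ := fun i j =>
    if i ∈ Ux ∩ Uy then (if j ∈ Vx ∩ Vy then 0 else if j ∈ Vx ∪ Vy then 1 else M)
    else if i ∈ Ux then (if j ∈ Vx then 0 else M)
    else if i ∈ Uy then (if j ∈ Vy then 0 else M)
    else M with hcdef
  have hc0 : ∀ i j, 0 ≤ c i j := by
    intro i j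
    simp only [hcdef]
    split_ifs <;> norm_num <;> positivity
  -- helper: sum of 0/1 indicator
  have hsum01 : ∀ W A : Finset (Fin n),
      ∑ j ∈ W, (if j ∈ A then (0:ℝ) else 1) = #(W \ A) := by
    intro W A
    rw [← Finset.sum_inter_add_sum_sdiff W A (fun j => if j ∈ A then (0:ℝ) else 1)]
    rw [Finset.sum_eq_zero (fun j hj => if_pos (Finset.mem_of_mem_inter_right hj)), zero_add]
    rw [Finset.sum_congr rfl (fun j hj => if_neg (Finset.mem_sdiff.mp hj).2)]
    simp
  have hinner : ∀ i ∈ Ux ∩ Uy, ∀ W : Finset (Fin n), (∀ j ∈ W, j ∈ Vx ∪ Vy) →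
      ∑ j ∈ W, c i j = #(W \ (Vx ∩ Vy)) := by
    intro i hi W hW
    rw [show ∑ j ∈ W, c i j = ∑ j ∈ W, (if j ∈ Vx ∩ Vy then (0:ℝ) else 1) from
      Finset.sum_congr rfl fun j hj => by
        simp only [hcdef, if_pos hi]
        by_cases h : j ∈ Vx ∩ Vy
        · simp [h]
        · simp [h, hW j hj]]
    exact hsum01 W (Vx ∩ Vy)
  have hVxd : #(Vx \ (Vx ∩ Vy)) = 2 * s - 2 * t := by
    have h1 := Finset.card_sdiff_add_card_inter Vx (Vx ∩ Vy)
    have h2 : Vx ∩ (Vx ∩ Vy) = Vx ∩ Vy := Finset.inter_eq_right.mpr Finset.inter_subset_left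
    rw [h2, hV, hVx] at h1
    omega
  have hVyd : #(Vy \ (Vx ∩ Vy)) = 2 * s - 2 * t := by
    have h1 := Finset.card_sdiff_add_card_inter Vy (Vx ∩ Vy)
    have h2 : Vy ∩ (Vx ∩ Vy) = Vx ∩ Vy := Finset.inter_eq_right.mpr Finset.inter_subset_right
    rw [h2, hV, hVy] at h1
    omega
  have hwx : weight c Ux Vx = (t : ℝ) * (2 * s - 2 * t) := by
    show ∑ i ∈ Ux, ∑ j ∈ Vx, c i j = _
    rw [← Finset.sum_inter_add_sum_sdiff Ux Uy (fun i => ∑ j ∈ Vx, c i j)]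
    have hdiff : ∑ i ∈ Ux \ Uy, ∑ j ∈ Vx, c i j = 0 :=
      Finset.sum_eq_zero (fun i hi => Finset.sum_eq_zero fun j hj => by
        obtain ⟨hiUx, hiUy⟩ := Finset.mem_sdiff.mp hi
        simp only [hcdef]
        rw [if_neg (fun h => hiUy (Finset.mem_of_mem_inter_right h)), if_pos hiUx, if_pos hj])
    rw [hdiff, add_zero,
      Finset.sum_congr rfl (fun i hi => hinner i hi Vx (fun j hj => Finset.mem_union_left _ hj))]
    rw [Finset.sum_const, hU, hVxd, nsmul_eq_mul]
    have : (t:ℝ) ≤ s := by exact_mod_cast hts.le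
    push_cast [Nat.cast_sub (by omega : 2 * t ≤ 2 * s)]
    ring
  have hwy : weight c Uy Vy = (t : ℝ) * (2 * s - 2 * t) := by
    show ∑ i ∈ Uy, ∑ j ∈ Vy, c i j = _
    rw [← Finset.sum_inter_add_sum_sdiff Uy Ux (fun i => ∑ j ∈ Vy, c i j)]
    have hdiff : ∑ i ∈ Uy \ Ux, ∑ j ∈ Vy, c i j = 0 :=
      Finset.sum_eq_zero (fun i hi => Finset.sum_eq_zero fun j hj => by
        obtain ⟨hiUy, hiUx⟩ := Finset.mem_sdiff.mp hi
        simp only [hcdef]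
        rw [if_neg (fun h => hiUx (Finset.mem_of_mem_inter_left h)), if_neg hiUx, if_pos hiUy,
          if_pos hj])
    rw [hdiff, add_zero, Finset.inter_comm,
      Finset.sum_congr rfl (fun i hi => hinner i hi Vy (fun j hj => Finset.mem_union_right _ hj))]
    rw [Finset.sum_const, hU, hVyd, nsmul_eq_mul]
    push_cast [Nat.cast_sub (by omega : 2 * t ≤ 2 * s)]
    ring
  refine ⟨c, hc0, by rw [hwx, hwy], ?_⟩
  rintro ⟨U, V⟩ hzc hzx hzy
  simp only at hzc ⊢
  rw [hwx]
  have hs2m : s ≤ 2 * m := by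
    have := Finset.card_le_univ Ux
    rw [hUx, Fintype.card_fin] at this
    omega
  have hVle : V.card ≤ 2 * m := by
    have := Finset.card_le_univ V
    rw [Fintype.card_fin] at this
    omega
  have hUle : U.card ≤ 2 * m := by
    have := Finset.card_le_univ U
    rw [Fintype.card_fin] at this
    omega
  have hU1 : 1 ≤ U.card := by omega
  have hV1 : 1 ≤ V.card := by omega
  obtain ⟨i₀, hi₀⟩ := Finset.card_pos.mp hU1
  obtain ⟨j₀, hj₀⟩ := Finset.card_pos.mp hV1
  have htR : (t:ℝ) + 1 ≤ s := by exact_mod_cast hts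
  have ht0 : (0:ℝ) ≤ t := Nat.cast_nonneg t
  by_cases hbig : ∃ i ∈ U, ∃ j ∈ V, M ≤ c i j
  · obtain ⟨i, hi, j, hj, hcij⟩ := hbig
    have h1 : c i j ≤ ∑ j' ∈ V, c i j' := Finset.single_le_sum (fun j' _ => hc0 i j') hj
    have h2 : ∑ j' ∈ V, c i j' ≤ weight c U V :=
      Finset.single_le_sum (fun i' _ => Finset.sum_nonneg fun j' _ => hc0 i' j') hi
    have hMval : (9:ℝ) * s * s + 1 ≤ weight c U V := by
      rw [hMdef] at hcij; linarith
    nlinarith [sq_nonneg ((s:ℝ) - t), sq_nonneg ((s:ℝ) + t)]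
  · push_neg at hbig
    have hUsub : ∀ i ∈ U, i ∈ Ux ∨ i ∈ Uy := by
      intro i hi
      by_contra h
      push_neg at h
      have hb := hbig i hi j₀ hj₀
      simp only [hcdef] at hb
      rw [if_neg (fun hh => h.1 (Finset.mem_of_mem_inter_left hh)), if_neg h.1, if_neg h.2] at hb
      exact lt_irrefl _ hb
    have hVsub : ∀ j ∈ V, j ∈ Vx ∨ j ∈ Vy := by
      intro j hj
      by_contra h
      push_neg at h
      have hb := hbig i₀ hi₀ j hj
      simp only [hcdef] at hb
      by_cases h2 : i₀ ∈ Ux ∩ Uy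
      · rw [if_pos h2, if_neg (fun hh => h.1 (Finset.mem_of_mem_inter_left hh)),
          if_neg (by simp [Finset.mem_union, h.1, h.2])] at hb
        exact lt_irrefl _ hb
      · by_cases h3 : i₀ ∈ Ux
        · rw [if_neg h2, if_pos h3, if_neg h.1] at hb
          exact lt_irrefl _ hb
        · rcases hUsub i₀ hi₀ with h1 | h1
          · exact h3 h1
          · rw [if_neg h2, if_neg h3, if_pos h1, if_neg h.2] at hb
            exact lt_irrefl _ hb
    by_cases hQ : ∃ i ∈ U, i ∈ Ux ∧ i ∉ Uy
    · by_cases hR : ∃ i ∈ U, i ∈ Uy ∧ i ∉ Ux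
      · -- both side classes used: contradiction with cardinalities
        exfalso
        obtain ⟨iq, hiqU, hiqx, hiqy⟩ := hQ
        obtain ⟨ir, hirU, hiry, hirx⟩ := hR
        have hVx' : ∀ j ∈ V, j ∈ Vx → j ∈ Vy := by
          intro j hj hjx
          by_contra hjy
          have hb := hbig ir hirU j hj
          simp only [hcdef] at hb
          rw [if_neg (fun hh => hirx (Finset.mem_of_mem_inter_left hh)), if_neg hirx,
            if_pos hiry, if_neg hjy] at hb
          exact lt_irrefl _ hb
        have hVy' : ∀ j ∈ V, j ∈ Vy → j ∈ Vx := by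
          intro j hj hjy
          by_contra hjx
          have hb := hbig iq hiqU j hj
          simp only [hcdef] at hb
          rw [if_neg (fun hh => hiqy (Finset.mem_of_mem_inter_right hh)), if_pos hiqx,
            if_neg hjx] at hb
          exact lt_irrefl _ hb
        have hVsub2 : V ⊆ Vx ∩ Vy := by
          intro j hj
          rcases hVsub j hj with h | h
          · exact Finset.mem_inter.mpr ⟨h, hVx' j hj h⟩
          · exact Finset.mem_inter.mpr ⟨hVy' j hj h, h⟩
        have h5 : V.card ≤ 2 * t := hV ▸ Finset.card_le_card hVsub2
        have h6 : U.card ≤ #(Ux ∪ Uy) :=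
          Finset.card_le_card (fun i hi => Finset.mem_union.mpr (hUsub i hi))
        have h7 := Finset.card_union_add_card_inter Ux Uy
        rw [hU, hUx, hUy] at h7
        omega
      · -- z = x case
        exfalso
        push_neg at hR
        have hUUx : U ⊆ Ux := fun i hi => (hUsub i hi).elim id (fun h => hR i hi h)
        obtain ⟨iq, hiqU, hiqx, hiqy⟩ := hQ
        have hVVx : V ⊆ Vx := by
          intro j hj
          by_contra hjx
          have hb := hbig iq hiqU j hj
          simp only [hcdef] at hb
          rw [if_neg (fun hh => hiqy (Finset.mem_of_mem_inter_right hh)), if_pos hiqx,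
            if_neg hjx] at hb
          exact lt_irrefl _ hb
        have h8 : U.card ≤ s := hUx ▸ Finset.card_le_card hUUx
        have h9 : V.card ≤ 2 * s := hVx ▸ Finset.card_le_card hVVx
        have hUeq : U = Ux := Finset.eq_of_subset_of_card_le hUUx (by omega)
        have hVeq : V = Vx := Finset.eq_of_subset_of_card_le hVVx (by omega)
        exact hzx (by rw [hUeq, hVeq])
    · by_cases hR : ∃ i ∈ U, i ∈ Uy ∧ i ∉ Ux
      · -- z = y case
        exfalso
        push_neg at hQ
        have hUUy : U ⊆ Uy := fun i hi => (hUsub i hi).elim (fun h => hQ i hi h) id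
        obtain ⟨ir, hirU, hiry, hirx⟩ := hR
        have hVVy : V ⊆ Vy := by
          intro j hj
          by_contra hjy
          have hb := hbig ir hirU j hj
          simp only [hcdef] at hb
          rw [if_neg (fun hh => hirx (Finset.mem_of_mem_inter_left hh)), if_neg hirx,
            if_pos hiry, if_neg hjy] at hb
          exact lt_irrefl _ hb
        have h8 : U.card ≤ s := hUy ▸ Finset.card_le_card hUUy
        have h9 : V.card ≤ 2 * s := hVy ▸ Finset.card_le_card hVVy
        have hUeq : U = Uy := Finset.eq_of_subset_of_card_le hUUy (by omega)
        have hVeq : V = Vy := Finset.eq_of_subset_of_card_le hVVy (by omega)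
        exact hzy (by rw [hUeq, hVeq])
      · -- main case: U inside the intersection
        push_neg at hQ
        push_neg at hR
        have hUPP : ∀ i ∈ U, i ∈ Ux ∩ Uy := by
          intro i hi
          rcases hUsub i hi with h | h
          · exact Finset.mem_inter.mpr ⟨h, hQ i hi h⟩
          · exact Finset.mem_inter.mpr ⟨hR i hi h, h⟩
        have hw : weight c U V = (U.card : ℝ) * #(V \ (Vx ∩ Vy)) := by
          show ∑ i ∈ U, ∑ j ∈ V, c i j = _
          rw [Finset.sum_congr rfl (fun i hi => hinner i (hUPP i hi) V
            (fun j hj => (hVsub j hj).elim (Finset.mem_union_left _) (Finset.mem_union_right _)))]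
          rw [Finset.sum_const, nsmul_eq_mul]
        rw [hw]
        have haT : U.card ≤ t := hU ▸ Finset.card_le_card (fun i hi => hUPP i hi)
        have hq := Finset.card_sdiff_add_card_inter V (Vx ∩ Vy)
        have hq2 : #(V ∩ (Vx ∩ Vy)) ≤ 2 * t := hV ▸ Finset.card_le_card Finset.inter_subset_right
        have h3a : s + 2 ≤ 3 * U.card := by omega
        have hqlb : 3 * s ≤ #(V \ (Vx ∩ Vy)) + U.card + 2 * t := by omega
        set a := U.card
        set qn := #(V \ (Vx ∩ Vy))
        have c1 : (a:ℝ) ≤ t := by exact_mod_cast haT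
        have c2 : (s:ℝ) + 2 ≤ 3 * a := by exact_mod_cast h3a
        have c3 : 3 * (s:ℝ) ≤ qn + a + 2 * t := by exact_mod_cast hqlb
        have c5 : (0:ℝ) ≤ qn := Nat.cast_nonneg qn
        have c6 : (0:ℝ) ≤ a := Nat.cast_nonneg a
        nlinarith [mul_nonneg c6 (by linarith : (0:ℝ) ≤ (qn:ℝ) + a + 2 * t - 3 * s),
          mul_nonneg (by linarith : (0:ℝ) ≤ 3 * (a:ℝ) - s - 2) (by linarith : (0:ℝ) ≤ (s:ℝ) - a),
          sq_nonneg (2 * (t:ℝ) - a - s)]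

/-- For `n = 2m` and `k = 3s` with `(9/4)·m < k < 3m` (i.e. `3m < 4s` and
`s < m`), there is a family of `C(m, s)` feasible solutions of the
unbalanced problem on `k` vertices that are pairwise adjacent in the
nonnegative cone decomposition `K^min_{n,k}` for the minimum problem: for
any two distinct members `x`, `y` there is a nonnegative weight function
`c` giving `x` and `y` equal weight and every other feasible solution a
strictly larger weight. Hence the clique number of the graph of
`K^min_{n,k}` is at least `C(m, s)`. -/
theorem minwcbs_clique_number (m s : ℕ) (hms : 3 * m < 4 * s) (hsm : s < m) :
    ∃ Y : Finset (Finset (Fin (2 * m)) × Finset (Fin (2 * m))),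
      Y.card = m.choose s ∧
      (∀ x ∈ Y, x.1.card + x.2.card = 3 * s) ∧
      ∀ x ∈ Y, ∀ y ∈ Y, x ≠ y →
        ∃ c : Fin (2 * m) → Fin (2 * m) → ℝ,
          (∀ i j, 0 ≤ c i j) ∧
          weight c x.1 x.2 = weight c y.1 y.2 ∧
          ∀ z : Finset (Fin (2 * m)) × Finset (Fin (2 * m)),
            z.1.card + z.2.card = 3 * s → z ≠ x → z ≠ y →
            weight c x.1 x.2 < weight c z.1 z.2 := by
  classical
  let f1 : Fin m ↪ Fin (2 * m) :=
    ⟨fun i => ⟨i.1, by have := i.2; omega⟩, by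
      intro i j h
      simp only [Fin.mk.injEq] at h
      exact Fin.ext h⟩
  let f2 : Fin m ↪ Fin (2 * m) :=
    ⟨fun i => ⟨m + i.1, by have := i.2; omega⟩, by
      intro i j h
      simp only [Fin.mk.injEq] at h
      exact Fin.ext (by omega : i.1 = j.1)⟩
  have hdisj : ∀ A B : Finset (Fin m), Disjoint (A.map f1) (B.map f2) := by
    intro A B
    rw [Finset.disjoint_left]
    rintro a ha hb
    simp only [Finset.mem_map] at ha hb
    obtain ⟨i, hi, hiv⟩ := ha
    obtain ⟨j, hj, hjv⟩ := hb
    have h1 : (f1 i).1 = a.1 := congrArg Fin.val hiv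
    have h2 : (f2 j).1 = a.1 := congrArg Fin.val hjv
    have hi2 := i.2
    have h1' : i.1 = a.1 := by rw [← hiv]; rfl
    have h2' : m + j.1 = a.1 := by rw [← hjv]; rfl
    simp only [f1, f2, Function.Embedding.coeFn_mk] at h1 h2
    omega
  have hkey : ∀ A B : Finset (Fin m),
      (A.map f1 ∪ A.map f2) ∩ (B.map f1 ∪ B.map f2) = (A ∩ B).map f1 ∪ (A ∩ B).map f2 := by
    intro A B
    ext a
    simp only [Finset.mem_inter, Finset.mem_union]
    constructor
    · rintro ⟨h1 | h1, h2 | h2⟩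
      · left; rw [Finset.map_inter]; exact Finset.mem_inter.mpr ⟨h1, h2⟩
      · exact absurd h2 (Finset.disjoint_left.mp (hdisj A B) h1)
      · exact absurd h1 (Finset.disjoint_left.mp (hdisj B A) h2)
      · right; rw [Finset.map_inter]; exact Finset.mem_inter.mpr ⟨h1, h2⟩
    · rintro (h | h)
      · rw [Finset.map_inter] at h
        have := Finset.mem_inter.mp h
        exact ⟨Or.inl this.1, Or.inl this.2⟩
      · rw [Finset.map_inter] at h
        have := Finset.mem_inter.mp h
        exact ⟨Or.inr this.1, Or.inr this.2⟩
  set F : Finset (Fin m) → Finset (Fin (2 * m)) × Finset (Fin (2 * m)) :=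
    fun S => (S.map f1, S.map f1 ∪ S.map f2) with hF
  have hFinj : Function.Injective F := by
    intro A B h
    exact Finset.map_injective f1 (congrArg Prod.fst h)
  refine ⟨(Finset.powersetCard s (Finset.univ : Finset (Fin m))).image F, ?_, ?_, ?_⟩
  · rw [Finset.card_image_of_injective _ hFinj, Finset.card_powersetCard, Finset.card_univ,
      Fintype.card_fin]
  · rintro x hx
    simp only [Finset.mem_image] at hx
    obtain ⟨S, hS, rfl⟩ := hx
    have hSc : S.card = s := Finset.mem_powersetCard_univ.mp hS
    simp only [hF]
    rw [Finset.card_map, Finset.card_union_of_disjoint (hdisj S S), Finset.card_map,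
      Finset.card_map, hSc]
    ring
  · rintro x hx y hy hxy
    simp only [Finset.mem_image] at hx hy
    obtain ⟨S, hS, rfl⟩ := hx
    obtain ⟨T, hT, rfl⟩ := hy
    have hSc : S.card = s := Finset.mem_powersetCard_univ.mp hS
    have hTc : T.card = s := Finset.mem_powersetCard_univ.mp hT
    have hST : S ≠ T := fun h => hxy (by rw [h])
    set t := (S ∩ T).card with htdef
    have hts : t < s := by
      have hsub : S ∩ T ⊆ S := Finset.inter_subset_left
      have hle : t ≤ s := hSc ▸ Finset.card_le_card hsub
      rcases lt_or_eq_of_le hle with h | h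
      · exact h
      · exfalso
        have h1 : S ∩ T = S := Finset.eq_of_subset_of_card_le hsub (by omega)
        have h2 : S ⊆ T := fun i hi => (Finset.mem_inter.mp (h1 ▸ hi)).2
        exact hST (Finset.eq_of_subset_of_card_le h2 (by omega))
    obtain ⟨c, hc0, hweq, hmain⟩ := exists_cost rfl hms hts (S.map f1) (T.map f1)
      (S.map f1 ∪ S.map f2) (T.map f1 ∪ T.map f2)
      (by rw [Finset.card_map, hSc]) (by rw [Finset.card_map, hTc])
      (by rw [Finset.card_union_of_disjoint (hdisj S S), Finset.card_map, Finset.card_map, hSc];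
          ring)
      (by rw [Finset.card_union_of_disjoint (hdisj T T), Finset.card_map, Finset.card_map, hTc];
          ring)
      (by rw [← Finset.map_inter, Finset.card_map])
      (by rw [hkey S T, Finset.card_union_of_disjoint (hdisj _ _), Finset.card_map,
          Finset.card_map]; ring)
    exact ⟨c, hc0, hweq, hmain⟩
end

section
/- There are no positive integers m, s, a, b satisfying simultaneously: b·(3s − b − 2a) ≤ 2a·(s − a), 3m < 4s, s < m, 2s − m ≤ a, a < s, 3s − 2m ≤ b, and b ≤ a. Equivalently, for all positive integers m, s, a, b (viewed in ℤ) with 3m < 4s, s < m, 2s − m ≤ a < s, and 3s − 2m ≤ b ≤ a, one has b·(3s − b − 2a) > 2a·(s − a). -/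
/-- There are no positive integers `m, s, a, b` with
`b(3s − b − 2a) ≤ 2a(s − a)`, `3m < 4s`, `s < m`, `2s − m ≤ a < s`, and
`3s − 2m ≤ b ≤ a`: under these side conditions one always has
`2a(s − a) < b(3s − b − 2a)` (all arithmetic in `ℤ`). -/
theorem minwcbs_system_no_solution :
    ∀ m s a b : ℤ, 0 < m → 0 < s → 0 < a → 0 < b →
      3 * m < 4 * s → s < m →
      2 * s - m ≤ a → a < s →
      3 * s - 2 * m ≤ b → b ≤ a →
      2 * a * (s - a) < b * (3 * s - b - 2 * a) := by
  intro m s a b hm hs ha hb h1 h2 h3 h4 h5 h6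
  have h7 : 0 < a - (3 * s - 2 * m) := by linarith
  have hms : (1:ℤ) ≤ m - s := by linarith
  have h43 : (1:ℤ) ≤ 4 * s - 3 * m := by linarith
  have hLC : (2:ℤ) ≤ 2 * ((2*s - m - a)^2 + (m - s) * (4*s - 3*m)) := by
    nlinarith [sq_nonneg (2*s - m - a), mul_le_mul hms h43 (by linarith) (by linarith : (0:ℤ) ≤ m - s)]
  have hLa : (1:ℤ) ≤ a * (s - a) := mul_pos ha (by linarith)
  nlinarith [mul_nonneg (mul_nonneg h7.le (by linarith : (0:ℤ) ≤ b - (3*s - 2*m))) (by linarith : (0:ℤ) ≤ a - b),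
    mul_nonneg (by linarith : (0:ℤ) ≤ a - b) (by linarith : (0:ℤ) ≤ 2 * ((2*s - m - a)^2 + (m - s) * (4*s - 3*m)) - 2),
    mul_nonneg (by linarith : (0:ℤ) ≤ b - (3*s - 2*m)) (by linarith : (0:ℤ) ≤ a * (s - a) - 1)]
end

section
/- Let n ≥ 1 and let k be a positive integer with k < 2n. Let E ⊆ (Fin n) × (Fin n) and define c : Fin n → Fin n → ℝ by c i j = n² if (i, j) ∈ E and c i j = 1 otherwise. Then for all A, B, A', B' ⊆ Fin n with |A| + |B| = k and |A'| + |B'| = k: if the number of E-edges inside A × B is strictly less than the number of E-edges inside A' × B' (i.e. |E ∩ (A × B)| < |E ∩ (A' × B')|), then ∑_{i ∈ A} ∑_{j ∈ B} c i j < ∑_{i ∈ A'} ∑_{j ∈ B'} c i j. In other words, the total contribution of all edges of weight 1 inside a feasible subgraph is less than the contribution of a single edge of weight n², so minimizing the weight of a complete bipartite subgraph on k vertices is equivalent to minimizing the number of E-edges it contains. -/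
open Finset

lemma minwcbs_sum_formula (n : ℕ) (E : Finset (Fin n × Fin n)) (c : Fin n → Fin n → ℝ)
    (hc : ∀ i j, c i j = if (i, j) ∈ E then (n : ℝ) ^ 2 else 1)
    (A B : Finset (Fin n)) :
    ∑ i ∈ A, ∑ j ∈ B, c i j
      = ((E ∩ A ×ˢ B).card : ℝ) * ((n : ℝ) ^ 2 - 1) + (A.card * B.card : ℕ) := by
  rw [← Finset.sum_product']
  have h1 : ∀ p ∈ A ×ˢ B, c p.1 p.2 = (if p ∈ E then ((n:ℝ)^2 - 1) else 0) + 1 := by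
    intro p _
    rw [hc]
    by_cases h : p ∈ E <;> simp [h]
  rw [Finset.sum_congr rfl h1, Finset.sum_add_distrib, Finset.sum_ite, Finset.sum_const,
    Finset.sum_const, Finset.sum_const]
  have h2 : (A ×ˢ B).filter (· ∈ E) = E ∩ A ×ˢ B := by
    ext p; simp [Finset.mem_filter, and_comm]
  rw [h2, Finset.card_product]
  push_cast
  ring

/-- For the minimum problem on `k < 2n` vertices with edge weights `n²` on
the edges of `E` and `1` elsewhere, the weight of a feasible pair `(A, B)`
is strictly smaller than the weight of a feasible pair `(A', B')` whenever
`(A, B)` contains strictly fewer `E`-edges than `(A', B')`: the total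
contribution of all weight-1 edges is less than the contribution of a
single edge of weight `n²`, so minimizing the weight is equivalent to
minimizing the number of `E`-edges. -/
theorem minwcbs_edge_count_dominates (n k : ℕ) (hn : 1 ≤ n) (hk : 1 ≤ k)
    (hkn : k < 2 * n)
    (E : Finset (Fin n × Fin n)) (c : Fin n → Fin n → ℝ)
    (hc : ∀ i j, c i j = if (i, j) ∈ E then (n : ℝ) ^ 2 else 1) :
    ∀ A B A' B' : Finset (Fin n),
      A.card + B.card = k → A'.card + B'.card = k →
      (E ∩ A ×ˢ B).card < (E ∩ A' ×ˢ B').card →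
      ∑ i ∈ A, ∑ j ∈ B, c i j < ∑ i ∈ A', ∑ j ∈ B', c i j := by
  intro A B A' B' hAB hAB' he
  rw [minwcbs_sum_formula n E c hc, minwcbs_sum_formula n E c hc]
  set e := (E ∩ A ×ˢ B).card with he1
  set e' := (E ∩ A' ×ˢ B').card with he2
  have hm' : e' ≤ A'.card * B'.card := by
    rw [← Finset.card_product]
    exact Finset.card_le_card (Finset.inter_subset_right)
  have h1 : 1 ≤ e' := by omega
  have hR : (e : ℝ) + 1 ≤ (e' : ℝ) := by exact_mod_cast he
  have hkR : ((A.card : ℝ) + B.card) + 1 ≤ 2 * n := by exact_mod_cast by omega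
  have hmR : ((A.card * B.card : ℕ) : ℝ) < (n : ℝ) ^ 2 := by
    push_cast
    nlinarith [sq_nonneg ((A.card : ℝ) - B.card)]
  have hm'R : (1 : ℝ) ≤ ((A'.card * B'.card : ℕ) : ℝ) := by exact_mod_cast h1.trans hm'
  have hnn : (0 : ℝ) ≤ (n : ℝ) ^ 2 - 1 := by
    have : (1 : ℝ) ≤ (n : ℝ) := by exact_mod_cast hn
    nlinarith
  nlinarith [mul_le_mul_of_nonneg_right hR hnn]
end
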